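/- Let Γ and G be finite nilpotent groups of the same order n. Then the number e'(Γ, G) of regular subgroups of Hol(G) isomorphic to Γ equals the product, over the primes p dividing n, of the numbers e'(Γ_p, G_p) of regular subgroups of Hol(G_p) isomorphic to Γ_p, where Γ_p and G_p denote the Sylow p-subgroups of Γ and G respectively. -/

import Mathlib

/- Formalization of results from "Hopf-Galois structures on extensions of degree p²q and
skew braces of order p²q: the cyclic Sylow p-subgroup case" (Campedel, Caranti, Del Corso).

Conventions: the paper composes permutations/automorphisms left-to-right and writes
`x^α` for the action; in Mathlib composition is right-to-left, so the paper's product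
`αβ` is rendered as `β * α`, the paper's `x^α` as `α x`, and the paper's conjugate
`α^β = β⁻¹αβ` as `β * α * β⁻¹`. -/

namespace HGS

universe u v

variable {G : Type*} [Group G]

/-- The right regular representation `ρ`: `rhoPerm g` is the permutation `x ↦ x * g`. -/
def rhoPerm (g : G) : Equiv.Perm G := Equiv.mulRight g

/-- The image `ρ(G)` of the right regular representation, as a subgroup of `Equiv.Perm G`. -/
def rhoSubgroup (G : Type*) [Group G] : Subgroup (Equiv.Perm G) where
  carrier := Set.range (rhoPerm (G := G))
  one_mem' := ⟨1, by ext x; simp [rhoPerm]⟩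
  mul_mem' := by
    rintro _ _ ⟨g, rfl⟩ ⟨h, rfl⟩
    exact ⟨h * g, by ext x; simp [rhoPerm, Equiv.Perm.mul_apply, mul_assoc]⟩
  inv_mem' := by
    rintro _ ⟨g, rfl⟩
    exact ⟨g⁻¹, by ext x; simp [rhoPerm, Equiv.Perm.inv_def, Equiv.mulRight_symm]⟩

/-- The (permutational) holomorph of `G`: the normalizer in the symmetric group
`Perm G` of the image of the right regular representation. -/
def Hol (G : Type*) [Group G] : Subgroup (Equiv.Perm G) :=
  Subgroup.normalizer (rhoSubgroup G : Set (Equiv.Perm G))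

/-- A subgroup `N ≤ Perm G` is regular if it acts simply transitively on the set `G`. -/
def IsRegularSubgroup (N : Subgroup (Equiv.Perm G)) : Prop :=
  ∀ x y : G, ∃! n : N, (n : Equiv.Perm G) x = y

/-- `eprime Γ G` is the number of regular subgroups of `Hol G` isomorphic to `Γ`. -/
noncomputable def eprime (Γ : Type u) (G : Type v) [Group Γ] [Group G] : ℕ :=
  {N : Subgroup (Equiv.Perm G) | N ≤ Hol G ∧ IsRegularSubgroup N ∧
    Nonempty (N ≃* Γ)}.ncard

set_option linter.unusedSectionVars false
section Aux

variable {H : Type*} [Group H]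

theorem mem_rhoSubgroup {σ : Equiv.Perm H} :
    σ ∈ rhoSubgroup H ↔ ∃ g : H, rhoPerm g = σ := Iff.rfl

@[simp] theorem rhoPerm_apply (g x : H) : rhoPerm g x = x * g := rfl

theorem mem_Hol_iff {σ : Equiv.Perm H} :
    σ ∈ Hol H ↔ ∃ θ : H ≃* H, ∀ x, σ x = θ x * σ 1 := by
  constructor
  · intro h
    have key : ∀ g y : H, σ (y * g) = σ y * ((σ 1)⁻¹ * σ g) := by
      intro g y
      obtain ⟨h', hh'⟩ := ((Subgroup.mem_normalizer_iff (H := rhoSubgroup H)).mp h (rhoPerm g)).mp ⟨g, rfl⟩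
      have e1 : ∀ z : H, σ (z * g) = σ z * h' := by
        intro z
        have := congrFun (congrArg (fun (e : Equiv.Perm H) => (e : H → H)) hh') (σ z)
        simpa [rhoPerm, Equiv.Perm.mul_apply] using this.symm
      have e2 := e1 1
      rw [one_mul] at e2
      rw [e1 y, e2]
      group
    refine ⟨⟨σ.trans (Equiv.mulRight (σ 1)⁻¹), ?_⟩, ?_⟩
    · intro a b
      show σ (a * b) * (σ 1)⁻¹ = (σ a * (σ 1)⁻¹) * (σ b * (σ 1)⁻¹)
      rw [key b a]
      group
    · intro x
      show σ x = (σ x * (σ 1)⁻¹) * σ 1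
      group
  · rintro ⟨θ, hθ⟩
    have hσ : σ = rhoPerm (σ 1) * (θ : H ≃ H) := by
      ext x
      rw [Equiv.Perm.mul_apply, hθ x]
      rfl
    rw [hσ]
    refine mul_mem (Subgroup.le_normalizer (H := rhoSubgroup H) ⟨σ 1, rfl⟩) ?_
    rw [Hol, Subgroup.mem_normalizer_iff]
    intro τ
    constructor
    · rintro ⟨g, rfl⟩
      refine ⟨θ g, ?_⟩
      have hsy : ((θ : H ≃ H)⁻¹ : Equiv.Perm H) = (θ.symm : H ≃ H) := rfl
      ext x
      simp [rhoPerm, Equiv.Perm.mul_apply, hsy, map_mul]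
    · rintro ⟨g, hg⟩
      refine ⟨θ.symm g, ?_⟩
      have : τ = ((θ : H ≃ H)⁻¹ * rhoPerm g) * (θ : H ≃ H) := by
        rw [hg]; group
      rw [this]
      ext x
      simp only [rhoPerm, Equiv.Perm.mul_apply]
      have : ((θ : H ≃ H)⁻¹ : Equiv.Perm H) = (θ.symm : H ≃ H) := rfl
      rw [this]
      simp [map_mul]

/-- Regularity is equivalent to bijectivity of evaluation at `1`. -/
theorem isRegular_iff_bijective (N : Subgroup (Equiv.Perm H)) :
    IsRegularSubgroup N ↔ Function.Bijective (fun ν : N => (ν : Equiv.Perm H) 1) := by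
  constructor
  · intro h
    constructor
    · intro ν μ hνμ
      obtain ⟨n, -, hu⟩ := h 1 ((ν : Equiv.Perm H) 1)
      exact (hu ν rfl).trans (hu μ hνμ.symm).symm
    · intro y
      obtain ⟨n, hn, -⟩ := h 1 y
      exact ⟨n, hn⟩
  · rintro ⟨hinj, hsurj⟩ x y
    obtain ⟨α, hα⟩ := hsurj x
    obtain ⟨β, hβ⟩ := hsurj y
    refine ⟨β * α⁻¹, ?_, ?_⟩
    · show ((β * α⁻¹ : N) : Equiv.Perm H) x = y
      have : (α : Equiv.Perm H)⁻¹ x = 1 := by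
        rw [← hα]; exact Equiv.symm_apply_apply _ _
      simp only [Subgroup.coe_mul] at *
      simp [Equiv.Perm.mul_apply, this, hβ]
    · intro ν hν
      have h1 : (β⁻¹ * ν * α : N) = 1 := by
        apply hinj
        show ((β⁻¹ * ν * α : N) : Equiv.Perm H) 1 = (1 : Equiv.Perm H) 1
        simp only [Subgroup.coe_mul] at *
        simp only [Equiv.Perm.mul_apply]
        simp [hα, hν, ← hβ]
      have : ν = β * 1 * α⁻¹ := by rw [← h1]; group
      rw [this]; group
  
theorem IsRegularSubgroup.eval_injective {N : Subgroup (Equiv.Perm H)}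
    (h : IsRegularSubgroup N) {ν μ : N} (hνμ : (ν : Equiv.Perm H) 1 = (μ : Equiv.Perm H) 1) :
    ν = μ := ((isRegular_iff_bijective N).mp h).1 hνμ

theorem IsRegularSubgroup.eval_surjective {N : Subgroup (Equiv.Perm H)}
    (h : IsRegularSubgroup N) (y : H) : ∃ ν : N, (ν : Equiv.Perm H) 1 = y :=
  ((isRegular_iff_bijective N).mp h).2 y

theorem IsRegularSubgroup.natCard_eq {N : Subgroup (Equiv.Perm H)}
    (h : IsRegularSubgroup N) : Nat.card N = Nat.card H :=
  Nat.card_eq_of_bijective _ ((isRegular_iff_bijective N).mp h)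

end Aux
section Transport

variable {H : Type*} {H' : Type*} [Group H] [Group H']

/-- A group isomorphism induces a `MulEquiv` between the permutation groups. -/
def permCongrMul (e : H ≃* H') : Equiv.Perm H ≃* Equiv.Perm H' where
  toEquiv := Equiv.permCongr e.toEquiv
  map_mul' σ τ := by
    ext x
    simp [Equiv.permCongr_apply, Equiv.Perm.mul_apply]

@[simp] theorem permCongrMul_apply (e : H ≃* H') (σ : Equiv.Perm H) (x : H') :
    permCongrMul e σ x = e (σ (e.symm x)) := rfl

theorem permCongrMul_symm (e : H ≃* H') :
    (permCongrMul e).symm = permCongrMul e.symm := rfl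

theorem map_permCongrMul_rho (e : H ≃* H') :
    Subgroup.map (permCongrMul e).toMonoidHom (rhoSubgroup H) = rhoSubgroup H' := by
  ext σ
  constructor
  · rintro ⟨τ, ⟨g, rfl⟩, rfl⟩
    refine ⟨e g, ?_⟩
    ext x
    simp [rhoPerm, map_mul]
  · rintro ⟨g, rfl⟩
    refine ⟨rhoPerm (e.symm g), ⟨e.symm g, rfl⟩, ?_⟩
    ext x
    simp [rhoPerm, map_mul]

theorem map_permCongrMul_Hol (e : H ≃* H') :
    Subgroup.map (permCongrMul e).toMonoidHom (Hol H) = Hol H' := by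
  rw [Hol, Hol, Subgroup.map_equiv_normalizer_eq, map_permCongrMul_rho]

theorem conds_map (e : H ≃* H') {Γ : Type*} [Group Γ] {N : Subgroup (Equiv.Perm H)}
    (h : N ≤ Hol H ∧ IsRegularSubgroup N ∧ Nonempty (N ≃* Γ)) :
    Subgroup.map (permCongrMul e).toMonoidHom N ≤ Hol H' ∧
      IsRegularSubgroup (Subgroup.map (permCongrMul e).toMonoidHom N) ∧
      Nonempty ((Subgroup.map (permCongrMul e).toMonoidHom N) ≃* Γ) := by
  obtain ⟨hHol, hreg, hiso⟩ := h
  have hinj : Function.Injective (permCongrMul e).toMonoidHom := (permCongrMul e).injective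
  refine ⟨?_, ?_, ?_⟩
  · rw [← map_permCongrMul_Hol e]
    exact Subgroup.map_mono hHol
  · rw [isRegular_iff_bijective]
    have heq : (fun ν : Subgroup.map (permCongrMul e).toMonoidHom N =>
        (ν : Equiv.Perm H') 1) =
        (e : H → H') ∘ (fun ν : N => (ν : Equiv.Perm H) 1) ∘
          (N.equivMapOfInjective _ hinj).symm := by
      funext ν
      obtain ⟨μ, hμ, hμ2⟩ := ν.2
      have hν : ν = N.equivMapOfInjective _ hinj ⟨μ, hμ⟩ := by
        apply Subtype.ext
        rw [← hμ2]
        rfl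
      simp only [hν, Function.comp_apply, MulEquiv.symm_apply_apply]
      have : ((N.equivMapOfInjective _ hinj ⟨μ, hμ⟩ : Subgroup.map _ N) : Equiv.Perm H')
          = permCongrMul e μ := rfl
      rw [this]
      simp
    rw [heq]
    exact e.bijective.comp (((isRegular_iff_bijective N).mp hreg).comp
      (N.equivMapOfInjective _ hinj).symm.bijective)
  · obtain ⟨f⟩ := hiso
    exact ⟨((N.equivMapOfInjective _ hinj).symm.trans f : _ ≃* Γ)⟩

theorem map_map_symm (e : H ≃* H') (N : Subgroup (Equiv.Perm H')) :
    Subgroup.map (permCongrMul e).toMonoidHom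
      (Subgroup.map (permCongrMul e.symm).toMonoidHom N) = N := by
  rw [Subgroup.map_map]
  ext σ
  simp only [Subgroup.mem_map, MonoidHom.comp_apply]
  constructor
  · rintro ⟨τ, hτ, rfl⟩
    have : (permCongrMul e).toMonoidHom ((permCongrMul e.symm).toMonoidHom τ) = τ := by
      rw [← permCongrMul_symm]
      exact (permCongrMul e).apply_symm_apply τ
    rwa [this]
  · intro hσ
    refine ⟨σ, hσ, ?_⟩
    rw [← permCongrMul_symm]
    exact (permCongrMul e).apply_symm_apply σ

theorem eprime_congr_right (Γ : Type u) [Group Γ] (e : H ≃* H') :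
    eprime Γ H = eprime Γ H' := by
  unfold eprime
  have himg : {N : Subgroup (Equiv.Perm H') | N ≤ Hol H' ∧ IsRegularSubgroup N ∧
      Nonempty (N ≃* Γ)} = (Subgroup.map (permCongrMul e).toMonoidHom) ''
      {N : Subgroup (Equiv.Perm H) | N ≤ Hol H ∧ IsRegularSubgroup N ∧ Nonempty (N ≃* Γ)} := by
    ext N'
    constructor
    · intro h
      refine ⟨Subgroup.map (permCongrMul e.symm).toMonoidHom N', conds_map e.symm h, ?_⟩
      exact map_map_symm e N'
    · rintro ⟨N, hN, rfl⟩
      exact conds_map e hN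
  rw [himg, Set.ncard_image_of_injective _
    (Subgroup.map_injective (permCongrMul e).injective)]

theorem eprime_congr_left {Γ Γ' : Type*} [Group Γ] [Group Γ'] (e : Γ ≃* Γ') :
    eprime Γ H = eprime Γ' H := by
  unfold eprime
  congr 1
  ext N
  simp only [Set.mem_setOf_eq, and_congr_right_iff]
  intro _ _
  exact ⟨fun ⟨f⟩ => ⟨f.trans e⟩, fun ⟨f⟩ => ⟨f.trans e.symm⟩⟩

end Transport
section PiMachinery

variable {ι : Type*} [Fintype ι] [DecidableEq ι] {Gp : ι → Type*}
  [∀ i, Group (Gp i)] [∀ i, Finite (Gp i)]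

/-- Coordinatewise action of a family of permutations, as a monoid hom. -/
def piPerm : (∀ i, Equiv.Perm (Gp i)) →* Equiv.Perm (∀ i, Gp i) where
  toFun f := Equiv.piCongrRight f
  map_one' := by ext x; simp
  map_mul' f g := by ext x; simp

@[simp] theorem piPerm_apply (f : ∀ i, Equiv.Perm (Gp i)) (x : ∀ i, Gp i) (i : ι) :
    piPerm f x i = f i (x i) := rfl

theorem piPerm_injective : Function.Injective (piPerm (Gp := Gp)) := by
  intro f g h
  funext i
  ext a
  have := congrFun (congrArg (fun (σ : Equiv.Perm (∀ i, Gp i)) => (σ : (∀ i, Gp i) → ∀ i, Gp i)) h)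
    (Pi.mulSingle i a)
  have h2 := congrFun this i
  simpa using h2

/-- The embedding of `Perm (Gp i)` into `Perm (Π i, Gp i)` acting on the `i`-th coordinate. -/
def embp (i : ι) : Equiv.Perm (Gp i) →* Equiv.Perm (∀ i, Gp i) :=
  piPerm.comp (MonoidHom.mulSingle (fun i => Equiv.Perm (Gp i)) i)

theorem embp_apply_same (i : ι) (σ : Equiv.Perm (Gp i)) (x : ∀ i, Gp i) :
    embp i σ x i = σ (x i) := by
  simp [embp]

theorem embp_apply_ne (i : ι) (σ : Equiv.Perm (Gp i)) (x : ∀ i, Gp i) {j : ι} (hj : j ≠ i) :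
    embp i σ x j = x j := by
  simp only [embp, MonoidHom.coe_comp, Function.comp_apply, MonoidHom.mulSingle_apply]
  rw [piPerm_apply, Pi.mulSingle_eq_of_ne hj]
  rfl

theorem embp_injective (i : ι) : Function.Injective (embp (Gp := Gp) i) := by
  intro σ τ h
  ext a
  have := congrArg (fun (ρ : Equiv.Perm (∀ i, Gp i)) => ρ (Pi.mulSingle i a) i) h
  simpa [embp_apply_same] using this

theorem embp_apply_one (i : ι) (σ : Equiv.Perm (Gp i)) :
    embp i σ 1 = Pi.mulSingle i (σ 1) := by
  funext j
  rcases eq_or_ne j i with rfl | hj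
  · rw [embp_apply_same, Pi.mulSingle_eq_same]
    rfl
  · rw [embp_apply_ne i σ 1 hj, Pi.mulSingle_eq_of_ne hj]
    rfl

end PiMachinery
section PiHol

variable {ι : Type*} [Fintype ι] [DecidableEq ι] {Gp : ι → Type*}
  [∀ i, Group (Gp i)] [∀ i, Finite (Gp i)]

/-- The `i`-th component function of a permutation of the product. -/
def comp1 (σ : Equiv.Perm (∀ i, Gp i)) (i : ι) : Gp i → Gp i :=
  fun a => σ (Pi.mulSingle i a) i

theorem comp1_one (i : ι) (a : Gp i) : comp1 (1 : Equiv.Perm (∀ i, Gp i)) i a = a := by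
  show (Pi.mulSingle i a) i = a
  rw [Pi.mulSingle_eq_same]

variable {pr : ι → ℕ} (hpr : ∀ i, (pr i).Prime) (hprinj : Function.Injective pr)
  {ep : ι → ℕ} (hcard : ∀ i, Nat.card (Gp i) = pr i ^ ep i)

include hpr hprinj hcard

/-- In a product of groups of pairwise coprime orders, an automorphism maps elements
that are trivial in the `i`-th coordinate to elements trivial in the `i`-th coordinate. -/
theorem mulEquiv_apply_eq_one (θ : (∀ i, Gp i) ≃* (∀ i, Gp i)) {i : ι} {z : ∀ i, Gp i}
    (hz : z i = 1) : θ z i = 1 := by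
  set m := ∏ j ∈ Finset.univ.erase i, pr j ^ ep j with hm
  have hzm : z ^ m = 1 := by
    funext j
    rcases eq_or_ne j i with rfl | hj
    · rw [Pi.pow_apply, hz, one_pow]; rfl
    · rw [Pi.pow_apply]
      have h1 : orderOf (z j) ∣ pr j ^ ep j := hcard j ▸ orderOf_dvd_natCard (z j)
      have h2 : pr j ^ ep j ∣ m :=
        Finset.dvd_prod_of_mem _ (Finset.mem_erase.mpr ⟨hj, Finset.mem_univ j⟩)
      rw [orderOf_dvd_iff_pow_eq_one.mp (h1.trans h2)]; rfl
  have hθm : (θ z i) ^ m = 1 := by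
    have : (θ z) ^ m = 1 := by rw [← map_pow, hzm, map_one]
    have := congrFun this i
    rwa [Pi.pow_apply] at this
  have hd1 : orderOf (θ z i) ∣ m := orderOf_dvd_iff_pow_eq_one.mpr hθm
  have hd2 : orderOf (θ z i) ∣ pr i ^ ep i := hcard i ▸ orderOf_dvd_natCard _
  have hco : Nat.Coprime (pr i ^ ep i) m := by
    apply Nat.Coprime.prod_right
    intro j hj
    have hne : pr i ≠ pr j := fun h => (Finset.mem_erase.mp hj).1 (hprinj h).symm
    exact Nat.Coprime.pow _ _ ((Nat.coprime_primes (hpr i) (hpr j)).mpr hne)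
  have hgcd : orderOf (θ z i) ∣ Nat.gcd (pr i ^ ep i) m := Nat.dvd_gcd hd2 hd1
  rw [Nat.coprime_iff_gcd_eq_one.mp hco] at hgcd
  rw [orderOf_eq_one_iff.mp (Nat.dvd_one.mp hgcd)]

theorem mulEquiv_single_apply_ne (θ : (∀ i, Gp i) ≃* (∀ i, Gp i)) {i j : ι} (hij : j ≠ i)
    (a : Gp i) : θ (Pi.mulSingle i a) j = 1 :=
  mulEquiv_apply_eq_one hpr hprinj hcard θ (Pi.mulSingle_eq_of_ne hij a)

theorem mulEquiv_apply_component (θ : (∀ i, Gp i) ≃* (∀ i, Gp i)) (x : ∀ i, Gp i) (i : ι) :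
    θ x i = θ (Pi.mulSingle i (x i)) i := by
  have hx : x = Pi.mulSingle i (x i) * ((Pi.mulSingle i (x i))⁻¹ * x) := by group
  have hy : ((Pi.mulSingle i (x i))⁻¹ * x) i = 1 := by
    rw [Pi.mul_apply, Pi.inv_apply, Pi.mulSingle_eq_same, inv_mul_cancel]
  calc θ x i = θ (Pi.mulSingle i (x i)) i * θ ((Pi.mulSingle i (x i))⁻¹ * x) i := by
        conv_lhs => rw [hx]
        rw [map_mul]; rfl
    _ = θ (Pi.mulSingle i (x i)) i := by
        rw [mulEquiv_apply_eq_one hpr hprinj hcard θ hy, mul_one]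

/-- The `i`-th component of an automorphism of the product. -/
noncomputable def compMulEquiv (θ : (∀ i, Gp i) ≃* (∀ i, Gp i)) (i : ι) : Gp i ≃* Gp i where
  toFun a := θ (Pi.mulSingle i a) i
  invFun a := θ.symm (Pi.mulSingle i a) i
  left_inv a := by
    dsimp only
    have hsingle : Pi.mulSingle i (θ (Pi.mulSingle i a) i) = θ (Pi.mulSingle i a) := by
      funext j
      rcases eq_or_ne j i with rfl | hj
      · rw [Pi.mulSingle_eq_same]
      · rw [Pi.mulSingle_eq_of_ne hj, mulEquiv_single_apply_ne hpr hprinj hcard θ hj]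
    rw [hsingle, MulEquiv.symm_apply_apply, Pi.mulSingle_eq_same]
  right_inv a := by
    dsimp only
    have hsingle : Pi.mulSingle i (θ.symm (Pi.mulSingle i a) i) = θ.symm (Pi.mulSingle i a) := by
      funext j
      rcases eq_or_ne j i with rfl | hj
      · rw [Pi.mulSingle_eq_same]
      · rw [Pi.mulSingle_eq_of_ne hj, mulEquiv_single_apply_ne hpr hprinj hcard θ.symm hj]
    rw [hsingle, MulEquiv.apply_symm_apply, Pi.mulSingle_eq_same]
  map_mul' a b := by
    show θ (Pi.mulSingle i (a * b)) i = θ (Pi.mulSingle i a) i * θ (Pi.mulSingle i b) i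
    have hs : Pi.mulSingle i (a * b) = Pi.mulSingle i a * Pi.mulSingle i b :=
      (MonoidHom.mulSingle Gp i).map_mul a b
    rw [hs, map_mul]
    rfl

theorem compMulEquiv_spec (θ : (∀ i, Gp i) ≃* (∀ i, Gp i)) (x : ∀ i, Gp i) (i : ι) :
    θ x i = compMulEquiv hpr hprinj hcard θ i (x i) :=
  mulEquiv_apply_component hpr hprinj hcard θ x i

/-- Every element of the holomorph of the product acts coordinatewise, with components
in the holomorphs of the factors. -/
theorem exists_piPerm_of_mem_Hol {σ : Equiv.Perm (∀ i, Gp i)} (hσ : σ ∈ Hol (∀ i, Gp i)) :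
    ∃ f : ∀ i, Equiv.Perm (Gp i), (∀ i, f i ∈ Hol (Gp i)) ∧ piPerm f = σ := by
  obtain ⟨θ, hθ⟩ := mem_Hol_iff.mp hσ
  refine ⟨fun i => ((compMulEquiv hpr hprinj hcard θ i : Gp i ≃ Gp i)).trans
    (Equiv.mulRight (σ 1 i)), fun i => ?_, ?_⟩
  · rw [mem_Hol_iff]
    refine ⟨compMulEquiv hpr hprinj hcard θ i, fun a => ?_⟩
    simp only [Equiv.trans_apply, Equiv.coe_mulRight, MulEquiv.coe_toEquiv, map_one, one_mul]
  · ext x j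
    rw [piPerm_apply]
    simp only [Equiv.trans_apply, Equiv.coe_mulRight, MulEquiv.coe_toEquiv]
    rw [← compMulEquiv_spec hpr hprinj hcard θ x j, hθ x]
    rfl

omit hpr hprinj hcard in
theorem piPerm_mem_Hol {f : ∀ i, Equiv.Perm (Gp i)} (hf : ∀ i, f i ∈ Hol (Gp i)) :
    piPerm f ∈ Hol (∀ i, Gp i) := by
  choose θs hθs using fun i => mem_Hol_iff.mp (hf i)
  rw [mem_Hol_iff]
  refine ⟨MulEquiv.piCongrRight θs, fun x => ?_⟩
  funext i
  rw [piPerm_apply, hθs i (x i)]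
  rfl

theorem comp1_spec {σ : Equiv.Perm (∀ i, Gp i)} (hσ : σ ∈ Hol (∀ i, Gp i)) (x : ∀ i, Gp i)
    (i : ι) : σ x i = comp1 σ i (x i) := by
  obtain ⟨f, -, rfl⟩ := exists_piPerm_of_mem_Hol hpr hprinj hcard hσ
  show f i (x i) = piPerm f (Pi.mulSingle i (x i)) i
  rw [piPerm_apply, Pi.mulSingle_eq_same]

theorem comp1_mul {σ τ : Equiv.Perm (∀ i, Gp i)} (hσ : σ ∈ Hol (∀ i, Gp i))
    (hτ : τ ∈ Hol (∀ i, Gp i)) (i : ι) (a : Gp i) :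
    comp1 (σ * τ) i a = comp1 σ i (comp1 τ i a) := by
  show (σ * τ) (Pi.mulSingle i a) i = _
  rw [Equiv.Perm.mul_apply, comp1_spec hpr hprinj hcard hσ]
  rfl

end PiHol
section Core

variable {ι : Type*} [Fintype ι] [DecidableEq ι] {Gp : ι → Type*}
  [∀ i, Group (Gp i)] [∀ i, Finite (Gp i)]
  {pr : ι → ℕ} (hpr : ∀ i, (pr i).Prime) (hprinj : Function.Injective pr)
  {ep : ι → ℕ} (hcard : ∀ i, Nat.card (Gp i) = pr i ^ ep i)
  {N : Subgroup (Equiv.Perm (∀ i, Gp i))}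
  (hNHol : N ≤ Hol (∀ i, Gp i)) (hNreg : IsRegularSubgroup N)

include hpr hprinj hcard hNHol

/-- The action of `N` on the `i`-th coordinate. -/
noncomputable def compHom (i : ι) : ↥N →* Equiv.Perm (Gp i) where
  toFun ν := ⟨comp1 (ν : Equiv.Perm (∀ i, Gp i)) i,
    comp1 ((ν⁻¹ : ↥N) : Equiv.Perm (∀ i, Gp i)) i,
    fun a => by
      rw [← comp1_mul hpr hprinj hcard (hNHol (ν⁻¹ : ↥N).2) (hNHol ν.2)]
      have h1 : ((ν⁻¹ : ↥N) : Equiv.Perm (∀ i, Gp i)) * (ν : Equiv.Perm (∀ i, Gp i)) = 1 := by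
        rw [← Subgroup.coe_mul, inv_mul_cancel, Subgroup.coe_one]
      rw [h1]
      exact comp1_one i a,
    fun a => by
      rw [← comp1_mul hpr hprinj hcard (hNHol ν.2) (hNHol (ν⁻¹ : ↥N).2)]
      have h1 : (ν : Equiv.Perm (∀ i, Gp i)) * ((ν⁻¹ : ↥N) : Equiv.Perm (∀ i, Gp i)) = 1 := by
        rw [← Subgroup.coe_mul, mul_inv_cancel, Subgroup.coe_one]
      rw [h1]
      exact comp1_one i a⟩
  map_one' := by
    ext a
    exact comp1_one i a
  map_mul' ν μ := by
    ext a
    show comp1 ((↑(ν * μ) : Equiv.Perm (∀ i, Gp i))) i a = _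
    rw [Subgroup.coe_mul, comp1_mul hpr hprinj hcard (hNHol ν.2) (hNHol μ.2)]
    rfl

theorem compHom_spec (i : ι) (ν : ↥N) (x : ∀ i, Gp i) :
    (ν : Equiv.Perm (∀ i, Gp i)) x i = compHom hpr hprinj hcard hNHol i ν (x i) :=
  comp1_spec hpr hprinj hcard (hNHol ν.2) x i

/-- The subgroup of `N` whose `j`-th coordinate action fixes `1`. -/
noncomputable def St (j : ι) : Subgroup ↥N :=
  Subgroup.comap (compHom hpr hprinj hcard hNHol j)
    (MulAction.stabilizer (Equiv.Perm (Gp j)) (1 : Gp j))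

theorem mem_St {j : ι} {ν : ↥N} :
    ν ∈ St hpr hprinj hcard hNHol j ↔ compHom hpr hprinj hcard hNHol j ν 1 = 1 := by
  rw [St, Subgroup.mem_comap, MulAction.mem_stabilizer_iff]
  rfl

include hNreg

theorem index_St (j : ι) : (St hpr hprinj hcard hNHol j).index = Nat.card (Gp j) := by
  letI : MulAction ↥N (Gp j) := MulAction.compHom _ (compHom hpr hprinj hcard hNHol j)
  have hstab : St hpr hprinj hcard hNHol j = MulAction.stabilizer ↥N (1 : Gp j) := by
    ext ν
    rw [mem_St hpr hprinj hcard hNHol, MulAction.mem_stabilizer_iff]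
    rfl
  haveI : MulAction.IsPretransitive ↥N (Gp j) := by
    constructor
    intro a b
    obtain ⟨ν, hν, -⟩ := hNreg (Pi.mulSingle j a) (Pi.mulSingle j b)
    refine ⟨ν, ?_⟩
    show compHom hpr hprinj hcard hNHol j ν a = b
    have := compHom_spec hpr hprinj hcard hNHol j ν (Pi.mulSingle j a)
    rw [Pi.mulSingle_eq_same] at this
    rw [← this, hν, Pi.mulSingle_eq_same]
  rw [hstab]
  exact MulAction.index_stabilizer_of_transitive ↥N 1

theorem card_N_eq : Nat.card ↥N = ∏ j, pr j ^ ep j := by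
  rw [hNreg.natCard_eq, Nat.card_pi]
  exact Finset.prod_congr rfl fun j _ => hcard j

theorem factorization_card_N (i : ι) : (Nat.card ↥N).factorization (pr i) = ep i := by
  rw [card_N_eq hpr hprinj hcard hNHol hNreg]
  rw [Nat.factorization_prod (fun j _ => pow_ne_zero _ (hpr j).pos.ne')]
  rw [Finset.sum_apply']
  rw [Finset.sum_eq_single i
    (fun j _ hj => by
      rw [Nat.Prime.factorization_pow (hpr j),
        Finsupp.single_eq_of_ne' (fun h => hj (hprinj h))])
    (fun h => absurd (Finset.mem_univ i) h)]
  rw [Nat.Prime.factorization_pow (hpr i), Finsupp.single_eq_same]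

variable (hNnil : Group.IsNilpotent ↥N)
include hNnil

theorem sylow_normal {p : ℕ} [hp : Fact p.Prime] (P : Sylow p ↥N) :
    (P : Subgroup ↥N).Normal := by
  have h := (isNilpotent_of_finite_tfae (G := ↥N)).out 0 3
  exact h.mp hNnil p hp P

theorem sylow_le_St {i j : ι} (hij : j ≠ i) (P : Sylow (pr i) ↥N) :
    (P : Subgroup ↥N) ≤ St hpr hprinj hcard hNHol j := by
  haveI : Fact (pr i).Prime := ⟨hpr i⟩
  haveI : Fact (pr j).Prime := ⟨hpr j⟩
  set S := St hpr hprinj hcard hNHol j with hS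
  let Q : Sylow (pr i) ↥S := default
  let Qm : Subgroup ↥N := Subgroup.map S.subtype ↑Q
  have hfacS : (Nat.card ↥S).factorization (pr i) = (Nat.card ↥N).factorization (pr i) := by
    have hprod : Nat.card ↥S * S.index = Nat.card ↥N := Subgroup.card_mul_index S
    have hidx : S.index = pr j ^ ep j := by
      rw [index_St hpr hprinj hcard hNHol hNreg j, hcard j]
    have hS0 : Nat.card ↥S ≠ 0 := Nat.card_pos.ne'
    rw [← hprod, hidx, Nat.factorization_mul hS0 (pow_ne_zero _ (hpr j).pos.ne')]
    rw [Finsupp.add_apply, Nat.Prime.factorization_pow (hpr j),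
      Finsupp.single_eq_of_ne' (fun h => hij (hprinj h)), add_zero]
  have hQmcard : Nat.card ↥Qm = pr i ^ (Nat.card ↥N).factorization (pr i) := by
    have : Nat.card ↥Qm = Nat.card ↥(Q : Subgroup ↥S) :=
      Nat.card_congr ((Subgroup.equivMapOfInjective (Q : Subgroup ↥S) S.subtype
        (Subgroup.subtype_injective S)).symm.toEquiv)
    rw [this, Sylow.card_eq_multiplicity Q, hfacS]
  have hQm : IsPGroup (pr i) ↥Qm := Q.isPGroup'.map _
  obtain ⟨R, hR⟩ := hQm.exists_le_sylow
  letI : Unique (Sylow (pr i) ↥N) :=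
    Sylow.unique_of_normal P (sylow_normal hpr hprinj hcard hNHol hNreg hNnil P)
  have hRP : R = P := Subsingleton.elim R P
  rw [hRP] at hR
  have hPQ : Qm = (P : Subgroup ↥N) := by
    apply Subgroup.eq_of_le_of_card_ge hR
    rw [hQmcard, Sylow.card_eq_multiplicity P]
  rw [← hPQ]
  exact Subgroup.map_subtype_le (Q : Subgroup ↥S)

theorem sylow_eval_ne {i : ι} (P : Sylow (pr i) ↥N) {ν : ↥N} (hν : ν ∈ (P : Subgroup ↥N))
    {j : ι} (hj : j ≠ i) : (ν : Equiv.Perm (∀ i, Gp i)) 1 j = 1 := by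
  have hmem := sylow_le_St hpr hprinj hcard hNHol hNreg hNnil hj P hν
  rw [mem_St hpr hprinj hcard hNHol] at hmem
  have := compHom_spec hpr hprinj hcard hNHol j ν 1
  rw [this]
  exact hmem

theorem exists_sylow_eval {i : ι} (P : Sylow (pr i) ↥N) (a : Gp i) :
    ∃ ν : ↥N, ν ∈ (P : Subgroup ↥N) ∧
      (ν : Equiv.Perm (∀ i, Gp i)) 1 = Pi.mulSingle i a := by
  haveI : Fact (pr i).Prime := ⟨hpr i⟩
  set φ : ↥(P : Subgroup ↥N) → Gp i :=
    fun ν => ((ν : ↥N) : Equiv.Perm (∀ i, Gp i)) 1 i with hφ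
  have hinj : Function.Injective φ := by
    intro ν μ h
    apply Subtype.ext
    apply hNreg.eval_injective
    funext j
    rcases eq_or_ne j i with rfl | hj
    · exact h
    · rw [sylow_eval_ne hpr hprinj hcard hNHol hNreg hNnil P ν.2 hj,
        sylow_eval_ne hpr hprinj hcard hNHol hNreg hNnil P μ.2 hj]
  have hcards : Nat.card ↥(P : Subgroup ↥N) = Nat.card (Gp i) := by
    rw [Sylow.card_eq_multiplicity P,
      factorization_card_N hpr hprinj hcard hNHol hNreg i, hcard i]
  have hbij : Function.Bijective φ :=
    (Nat.bijective_iff_injective_and_card φ).mpr ⟨hinj, hcards⟩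
  obtain ⟨ν, hν⟩ := hbij.2 a
  refine ⟨ν.1, ν.2, ?_⟩
  funext j
  rcases eq_or_ne j i with rfl | hj
  · rw [Pi.mulSingle_eq_same]
    exact hν
  · rw [Pi.mulSingle_eq_of_ne hj]
    exact sylow_eval_ne hpr hprinj hcard hNHol hNreg hNnil P ν.2 hj

theorem sylow_comp_ne {i : ι} (P : Sylow (pr i) ↥N) {ν : ↥N} (hν : ν ∈ (P : Subgroup ↥N))
    {j : ι} (hj : j ≠ i) (y : Gp j) :
    comp1 (ν : Equiv.Perm (∀ i, Gp i)) j y = y := by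
  haveI : Fact (pr i).Prime := ⟨hpr i⟩
  haveI : Fact (pr j).Prime := ⟨hpr j⟩
  let Pj : Sylow (pr j) ↥N := default
  obtain ⟨μ, hμP, hμ⟩ := exists_sylow_eval hpr hprinj hcard hNHol hNreg hNnil Pj y
  have hcomm : ν * μ = μ * ν := by
    refine Subgroup.commute_of_normal_of_disjoint _ _
      (sylow_normal hpr hprinj hcard hNHol hNreg hNnil P)
      (sylow_normal hpr hprinj hcard hNHol hNreg hNnil Pj)
      (IsPGroup.disjoint_of_ne (pr i) (pr j) (fun h => hj (hprinj h).symm)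
        _ _ P.isPGroup' Pj.isPGroup') ν μ hν hμP
  have hy : comp1 (μ : Equiv.Perm (∀ i, Gp i)) j 1 = y := by
    show (μ : Equiv.Perm (∀ i, Gp i)) (Pi.mulSingle j 1) j = y
    rw [Pi.mulSingle_one]
    rw [hμ, Pi.mulSingle_eq_same]
  have hν1 : comp1 (ν : Equiv.Perm (∀ i, Gp i)) j 1 = 1 := by
    have hmem := sylow_le_St hpr hprinj hcard hNHol hNreg hNnil hj P hν
    rw [mem_St hpr hprinj hcard hNHol] at hmem
    exact hmem
  calc comp1 (ν : Equiv.Perm (∀ i, Gp i)) j y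
      = comp1 (ν : Equiv.Perm (∀ i, Gp i)) j (comp1 (μ : Equiv.Perm (∀ i, Gp i)) j 1) := by
        rw [hy]
    _ = comp1 ((ν : Equiv.Perm (∀ i, Gp i)) * (μ : Equiv.Perm (∀ i, Gp i))) j 1 :=
        (comp1_mul hpr hprinj hcard (hNHol ν.2) (hNHol μ.2) j 1).symm
    _ = comp1 ((μ : Equiv.Perm (∀ i, Gp i)) * (ν : Equiv.Perm (∀ i, Gp i))) j 1 := by
        rw [← Subgroup.coe_mul, ← Subgroup.coe_mul, hcomm]
    _ = comp1 (μ : Equiv.Perm (∀ i, Gp i)) j (comp1 (ν : Equiv.Perm (∀ i, Gp i)) j 1) :=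
        comp1_mul hpr hprinj hcard (hNHol μ.2) (hNHol ν.2) j 1
    _ = y := by rw [hν1, hy]

theorem sylow_embp {i : ι} (P : Sylow (pr i) ↥N) {ν : ↥N} (hν : ν ∈ (P : Subgroup ↥N)) :
    embp i (compHom hpr hprinj hcard hNHol i ν) = (ν : Equiv.Perm (∀ i, Gp i)) := by
  ext x j
  rcases eq_or_ne j i with rfl | hj
  · rw [embp_apply_same]
    exact (compHom_spec hpr hprinj hcard hNHol j ν x).symm
  · rw [embp_apply_ne i _ x hj]
    rw [comp1_spec hpr hprinj hcard (hNHol ν.2) x j]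
    exact (sylow_comp_ne hpr hprinj hcard hNHol hNreg hNnil P hν hj (x j)).symm

end Core
section Backward

variable {ι : Type*} [Fintype ι] [DecidableEq ι] {Gp : ι → Type*}
  [∀ i, Group (Gp i)] [∀ i, Finite (Gp i)]

/-- The product of a family of subgroups of the factor permutation groups, viewed inside
the permutation group of the product. -/
def BN (M : ∀ i, Subgroup (Equiv.Perm (Gp i))) : Subgroup (Equiv.Perm (∀ i, Gp i)) :=
  Subgroup.map piPerm (Subgroup.pi Set.univ M)

theorem mem_BN (M : ∀ i, Subgroup (Equiv.Perm (Gp i))) {σ : Equiv.Perm (∀ i, Gp i)} :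
    σ ∈ BN M ↔ ∃ g : ∀ i, Equiv.Perm (Gp i), (∀ i, g i ∈ M i) ∧ piPerm g = σ := by
  constructor
  · rintro ⟨g, hg, rfl⟩
    exact ⟨g, fun i => hg i (Set.mem_univ i), rfl⟩
  · rintro ⟨g, hg, rfl⟩
    exact ⟨g, fun i _ => hg i, rfl⟩

theorem BN_le_Hol {M : ∀ i, Subgroup (Equiv.Perm (Gp i))} (hM : ∀ i, M i ≤ Hol (Gp i)) :
    BN M ≤ Hol (∀ i, Gp i) := by
  intro σ hσ
  obtain ⟨g, hg, rfl⟩ := (mem_BN M).mp hσ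
  exact piPerm_mem_Hol (fun i => hM i (hg i))

theorem BN_eval_bijective {M : ∀ i, Subgroup (Equiv.Perm (Gp i))}
    (hM : ∀ i, IsRegularSubgroup (M i)) :
    Function.Bijective (fun ν : ↥(BN M) => (ν : Equiv.Perm (∀ i, Gp i)) 1) := by
  constructor
  · intro ν τ h
    obtain ⟨g, hg, hpig⟩ := (mem_BN M).mp ν.2
    obtain ⟨g', hg', hpig'⟩ := (mem_BN M).mp τ.2
    have hgg : g = g' := by
      funext i
      have hei : g i 1 = g' i 1 := by
        have h2 : piPerm g 1 = piPerm g' 1 := by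
          rw [hpig, hpig']
          exact h
        have h3 := congrFun h2 i
        simpa using h3
      have := (hM i).eval_injective (ν := ⟨g i, hg i⟩) (μ := ⟨g' i, hg' i⟩) hei
      exact congrArg Subtype.val this
    apply Subtype.ext
    rw [← hpig, ← hpig', hgg]
  · intro y
    have hch : ∀ i, ∃ σ : ↥(M i), (σ : Equiv.Perm (Gp i)) 1 = y i :=
      fun i => (hM i).eval_surjective (y i)
    choose σs hσs using hch
    refine ⟨⟨piPerm (fun i => (σs i : Equiv.Perm (Gp i))),
      (mem_BN M).mpr ⟨_, fun i => (σs i).2, rfl⟩⟩, ?_⟩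
    show piPerm (fun i => (σs i : Equiv.Perm (Gp i))) 1 = y
    funext i
    rw [piPerm_apply]
    exact hσs i

/-- The subgroup `pi univ M` is isomorphic to the direct product of the `M i`. -/
def piSubgroupEquiv (M : ∀ i, Subgroup (Equiv.Perm (Gp i))) :
    ↥(Subgroup.pi Set.univ M) ≃* ∀ i, ↥(M i) where
  toFun x := fun i => ⟨x.1 i, x.2 i (Set.mem_univ i)⟩
  invFun g := ⟨fun i => g i, fun i _ => (g i).2⟩
  left_inv _ := rfl
  right_inv _ := rfl
  map_mul' _ _ := rfl

/-- `BN M` is isomorphic to the direct product of the `M i`. -/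
noncomputable def BNEquiv (M : ∀ i, Subgroup (Equiv.Perm (Gp i))) :
    ↥(BN M) ≃* ∀ i, ↥(M i) :=
  ((Subgroup.equivMapOfInjective (Subgroup.pi Set.univ M) piPerm piPerm_injective).symm).trans
    (piSubgroupEquiv M)

theorem BN_card (M : ∀ i, Subgroup (Equiv.Perm (Gp i))) :
    Nat.card ↥(BN M) = ∏ i, Nat.card ↥(M i) := by
  rw [Nat.card_congr (BNEquiv M).toEquiv, Nat.card_pi]

theorem comap_BN (M : ∀ i, Subgroup (Equiv.Perm (Gp i))) (i : ι) :
    Subgroup.comap (embp i) (BN M) = M i := by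
  ext σ
  rw [Subgroup.mem_comap]
  constructor
  · intro h
    obtain ⟨g, hg, hpi⟩ := (mem_BN M).mp h
    have hg' : g = Pi.mulSingle i σ := by
      apply piPerm_injective
      rw [hpi]
      rfl
    have hgi := congrFun hg' i
    rw [Pi.mulSingle_eq_same] at hgi
    rw [← hgi]
    exact hg i
  · intro hσ
    refine (mem_BN M).mpr ⟨Pi.mulSingle i σ, fun j => ?_, rfl⟩
    rcases eq_or_ne j i with rfl | hj
    · rwa [Pi.mulSingle_eq_same]
    · rw [Pi.mulSingle_eq_of_ne hj]
      exact one_mem _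

end Backward

section MainCore

variable {ι : Type*} [Fintype ι] [DecidableEq ι] {Gp : ι → Type*}
  [∀ i, Group (Gp i)] [∀ i, Finite (Gp i)]
  {pr : ι → ℕ} (hpr : ∀ i, (pr i).Prime) (hprinj : Function.Injective pr)
  {ep : ι → ℕ} (hcard : ∀ i, Nat.card (Gp i) = pr i ^ ep i)
  {N : Subgroup (Equiv.Perm (∀ i, Gp i))}
  (hNHol : N ≤ Hol (∀ i, Gp i)) (hNreg : IsRegularSubgroup N)

include hpr hprinj hcard hNHol hNreg

theorem Mi_le_Hol (i : ι) : Subgroup.comap (embp i) N ≤ Hol (Gp i) := by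
  intro σ hσ
  have h1 : embp i σ ∈ Hol (∀ i, Gp i) := hNHol hσ
  obtain ⟨f, hf, hfe⟩ := exists_piPerm_of_mem_Hol hpr hprinj hcard h1
  have hfi : f i = σ := by
    ext a
    have h2 := congrFun (congrArg (fun (ρ : Equiv.Perm (∀ i, Gp i)) =>
      (ρ : (∀ i, Gp i) → ∀ i, Gp i)) hfe) (Pi.mulSingle i a)
    have h3 := congrFun h2 i
    simp only [piPerm_apply, Pi.mulSingle_eq_same, embp_apply_same] at h3
    exact h3
  rw [← hfi]
  exact hf i

variable (hNnil : Group.IsNilpotent ↥N)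
include hNnil

theorem Mi_eval_bijective (i : ι) :
    Function.Bijective
      (fun σ : ↥(Subgroup.comap (embp i) N) => (σ : Equiv.Perm (Gp i)) 1) := by
  constructor
  · intro σ τ h
    apply Subtype.ext
    apply embp_injective i
    have h' : (σ : Equiv.Perm (Gp i)) 1 = (τ : Equiv.Perm (Gp i)) 1 := h
    have heq : embp i (σ : Equiv.Perm (Gp i)) 1 = embp i (τ : Equiv.Perm (Gp i)) 1 := by
      rw [embp_apply_one, embp_apply_one, h']
    have hN : (⟨embp i ↑σ, σ.2⟩ : ↥N) = ⟨embp i ↑τ, τ.2⟩ := hNreg.eval_injective heq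
    exact congrArg Subtype.val hN
  · intro a
    haveI : Fact (pr i).Prime := ⟨hpr i⟩
    let P : Sylow (pr i) ↥N := default
    obtain ⟨ν, hνP, hν1⟩ := exists_sylow_eval hpr hprinj hcard hNHol hNreg hNnil P a
    have hemb := sylow_embp hpr hprinj hcard hNHol hNreg hNnil P hνP
    refine ⟨⟨compHom hpr hprinj hcard hNHol i ν, ?_⟩, ?_⟩
    · show embp i (compHom hpr hprinj hcard hNHol i ν) ∈ N
      rw [hemb]
      exact ν.2
    · show compHom hpr hprinj hcard hNHol i ν 1 = a
      have h2 := compHom_spec hpr hprinj hcard hNHol i ν 1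
      have h3 := congrFun hν1 i
      rw [Pi.mulSingle_eq_same] at h3
      exact h2.symm.trans h3
  
theorem Mi_card (i : ι) : Nat.card ↥(Subgroup.comap (embp i) N) = Nat.card (Gp i) :=
  Nat.card_eq_of_bijective _ (Mi_eval_bijective hpr hprinj hcard hNHol hNreg hNnil i)

theorem Mi_regular (i : ι) : IsRegularSubgroup (Subgroup.comap (embp i) N) :=
  (isRegular_iff_bijective _).mpr (Mi_eval_bijective hpr hprinj hcard hNHol hNreg hNnil i)

theorem map_Mi_eq_sylow (i : ι) (P : Sylow (pr i) ↥N) :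
    Subgroup.map (embp i) (Subgroup.comap (embp i) N) =
      Subgroup.map N.subtype (P : Subgroup ↥N) := by
  haveI : Fact (pr i).Prime := ⟨hpr i⟩
  have hle : Subgroup.map N.subtype (P : Subgroup ↥N) ≤
      Subgroup.map (embp i) (Subgroup.comap (embp i) N) := by
    rintro _ ⟨ν, hν, rfl⟩
    have hemb := sylow_embp hpr hprinj hcard hNHol hNreg hNnil P hν
    refine ⟨compHom hpr hprinj hcard hNHol i ν, ?_, hemb⟩
    show embp i (compHom hpr hprinj hcard hNHol i ν) ∈ N
    rw [hemb]
    exact ν.2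
  have hcards : Nat.card ↥(Subgroup.map (embp i) (Subgroup.comap (embp i) N)) ≤
      Nat.card ↥(Subgroup.map N.subtype (P : Subgroup ↥N)) := by
    have h1 : Nat.card ↥(Subgroup.map (embp i) (Subgroup.comap (embp i) N)) =
        Nat.card (Gp i) := by
      rw [Nat.card_congr (Subgroup.equivMapOfInjective (Subgroup.comap (embp i) N) (embp i)
        (embp_injective i)).symm.toEquiv]
      exact Mi_card hpr hprinj hcard hNHol hNreg hNnil i
    have h2 : Nat.card ↥(Subgroup.map N.subtype (P : Subgroup ↥N)) = Nat.card (Gp i) := by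
      rw [Nat.card_congr (Subgroup.equivMapOfInjective (P : Subgroup ↥N) N.subtype
        (Subgroup.subtype_injective N)).symm.toEquiv]
      rw [Sylow.card_eq_multiplicity P,
        factorization_card_N hpr hprinj hcard hNHol hNreg i, hcard i]
    rw [h1, h2]
  exact (Subgroup.eq_of_le_of_card_ge hle hcards).symm

theorem Mi_iso_sylow (i : ι) (P : Sylow (pr i) ↥N) :
    Nonempty (↥(Subgroup.comap (embp i) N) ≃* ↥(P : Subgroup ↥N)) :=
  ⟨(Subgroup.equivMapOfInjective (Subgroup.comap (embp i) N) (embp i)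
      (embp_injective i)).trans
    ((MulEquiv.subgroupCongr
        (map_Mi_eq_sylow hpr hprinj hcard hNHol hNreg hNnil i P)).trans
      (Subgroup.equivMapOfInjective (P : Subgroup ↥N) N.subtype
        (Subgroup.subtype_injective N)).symm)⟩

theorem BN_comap : BN (fun i => Subgroup.comap (embp i) N) = N := by
  have hle : BN (fun i => Subgroup.comap (embp i) N) ≤ N := by
    intro σ hσ
    obtain ⟨g, hg, rfl⟩ := (mem_BN _).mp hσ
    have key : ∀ s : Finset ι,
        piPerm (fun i => if i ∈ s then g i else 1) ∈ N := by
      intro s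
      induction s using Finset.induction_on with
      | empty =>
          have : (fun i => if i ∈ (∅ : Finset ι) then g i else 1) =
              (1 : ∀ i, Equiv.Perm (Gp i)) := by
            funext i; simp
          rw [this, map_one]
          exact one_mem N
      | @insert j s hj ih =>
          have hsplit : (fun i => if i ∈ insert j s then g i else 1) =
              Pi.mulSingle j (g j) * (fun i => if i ∈ s then g i else 1) := by
            funext i
            rcases eq_or_ne i j with rfl | hij
            · simp [hj]
            · simp [hij, Pi.mulSingle_eq_of_ne hij]
          rw [hsplit, map_mul]
          refine mul_mem ?_ ih
          exact hg j
    have : (fun i => if i ∈ (Finset.univ : Finset ι) then g i else 1) = g := by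
      funext i; simp
    have h2 := key Finset.univ
    rwa [this] at h2
  have hcards : Nat.card ↥N ≤ Nat.card ↥(BN (fun i => Subgroup.comap (embp i) N)) := by
    rw [BN_card, card_N_eq hpr hprinj hcard hNHol hNreg]
    apply le_of_eq
    refine Finset.prod_congr rfl fun i _ => ?_
    rw [Mi_card hpr hprinj hcard hNHol hNreg hNnil i, hcard i]
  exact Subgroup.eq_of_le_of_card_ge hle hcards

end MainCore
section Count

theorem sylow_iso_of_mulEquiv {A : Type*} {B : Type*} [Group A] [Group B] [Finite A] [Finite B]
    (e : A ≃* B) (hB : Group.IsNilpotent B) {p : ℕ} (hp : p.Prime)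
    (P : Sylow p A) (Q : Sylow p B) :
    Nonempty (↥(P : Subgroup A) ≃* ↥(Q : Subgroup B)) := by
  haveI : Fact p.Prime := ⟨hp⟩
  have hmap : IsPGroup p ↥(Subgroup.map e.toMonoidHom (P : Subgroup A)) :=
    P.isPGroup'.map _
  obtain ⟨R, hR⟩ := hmap.exists_le_sylow
  have hAB : Nat.card A = Nat.card B := Nat.card_congr e.toEquiv
  have hcards : Nat.card ↥(R : Subgroup B) ≤
      Nat.card ↥(Subgroup.map e.toMonoidHom (P : Subgroup A)) := by
    rw [Nat.card_congr (Subgroup.equivMapOfInjective (P : Subgroup A) e.toMonoidHom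
      e.injective).symm.toEquiv]
    rw [Sylow.card_eq_multiplicity P, Sylow.card_eq_multiplicity R, hAB]
  have hPR : Subgroup.map e.toMonoidHom (P : Subgroup A) = (R : Subgroup B) :=
    Subgroup.eq_of_le_of_card_ge hR hcards
  have hQnormal : (Q : Subgroup B).Normal := by
    have h := (isNilpotent_of_finite_tfae (G := B)).out 0 3
    exact h.mp hB p ‹_› Q
  letI : Unique (Sylow p B) := Sylow.unique_of_normal Q hQnormal
  have hRQ : (R : Subgroup B) = (Q : Subgroup B) := by rw [Subsingleton.elim R Q]
  exact ⟨(Subgroup.equivMapOfInjective (P : Subgroup A) e.toMonoidHom e.injective).trans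
    (MulEquiv.subgroupCongr (hPR.trans hRQ))⟩

variable {ι : Type*} [Fintype ι] [DecidableEq ι] {Gp : ι → Type*}
  [∀ i, Group (Gp i)] [∀ i, Finite (Gp i)]
  {pr : ι → ℕ} (hpr : ∀ i, (pr i).Prime) (hprinj : Function.Injective pr)
  {ep : ι → ℕ} (hcard : ∀ i, Nat.card (Gp i) = pr i ^ ep i)

include hpr hprinj hcard in
theorem eprime_pi (Γ : Type u) [Group Γ] [Finite Γ] (hΓnil : Group.IsNilpotent Γ)
    (PΓ : ∀ i, Sylow (pr i) Γ) (eΓ : Γ ≃* ∀ i, ↥((PΓ i : Subgroup Γ))) :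
    eprime Γ (∀ i, Gp i) = ∏ i, eprime ↥((PΓ i : Subgroup Γ)) (Gp i) := by
  classical
  set S : Set (Subgroup (Equiv.Perm (∀ i, Gp i))) :=
    {N | N ≤ Hol (∀ i, Gp i) ∧ IsRegularSubgroup N ∧ Nonempty (↥N ≃* Γ)} with hS
  set T : ∀ i, Set (Subgroup (Equiv.Perm (Gp i))) := fun i =>
    {M | M ≤ Hol (Gp i) ∧ IsRegularSubgroup M ∧
      Nonempty (↥M ≃* ↥((PΓ i : Subgroup Γ)))} with hT
  have hforward : ∀ N ∈ S, ∀ i, Subgroup.comap (embp i) N ∈ T i := by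
    intro N hN i
    obtain ⟨hHol, hreg, ⟨f⟩⟩ := hN
    have hnil : Group.IsNilpotent ↥N := by
      haveI := hΓnil
      exact nilpotent_of_mulEquiv f.symm
    haveI : Fact (pr i).Prime := ⟨hpr i⟩
    refine ⟨Mi_le_Hol hpr hprinj hcard hHol hreg i,
      Mi_regular hpr hprinj hcard hHol hreg hnil i, ?_⟩
    obtain ⟨g⟩ := Mi_iso_sylow hpr hprinj hcard hHol hreg hnil i (default : Sylow (pr i) ↥N)
    obtain ⟨h⟩ := sylow_iso_of_mulEquiv f hΓnil (hpr i) (default : Sylow (pr i) ↥N) (PΓ i)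
    exact ⟨g.trans h⟩
  have hbackward : ∀ (Ms : ∀ i, Subgroup (Equiv.Perm (Gp i))), (∀ i, Ms i ∈ T i) →
      BN Ms ∈ S := by
    intro Ms hMs
    refine ⟨BN_le_Hol (fun i => (hMs i).1), (isRegular_iff_bijective _).mpr
      (BN_eval_bijective (fun i => (hMs i).2.1)), ?_⟩
    have hiso : ∀ i, ↥(Ms i) ≃* ↥((PΓ i : Subgroup Γ)) := fun i => Classical.choice (hMs i).2.2
    exact ⟨(BNEquiv Ms).trans ((MulEquiv.piCongrRight hiso).trans eΓ.symm)⟩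
  have hequiv : ↥S ≃ ∀ i, ↥(T i) :=
    { toFun := fun N => fun i => ⟨Subgroup.comap (embp i) N.1, hforward N.1 N.2 i⟩
      invFun := fun Ms => ⟨BN (fun i => (Ms i).1), hbackward _ (fun i => (Ms i).2)⟩
      left_inv := fun N => by
        apply Subtype.ext
        obtain ⟨hHol, hreg, ⟨f⟩⟩ := N.2
        have hnil : Group.IsNilpotent ↥(N.1) := by
          haveI := hΓnil
          exact nilpotent_of_mulEquiv f.symm
        exact BN_comap hpr hprinj hcard hHol hreg hnil
      right_inv := fun Ms => by
        funext i
        apply Subtype.ext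
        exact comap_BN (fun j => (Ms j).1) i }
  have h1 : eprime Γ (∀ i, Gp i) = Nat.card ↥S := (Nat.card_coe_set_eq S).symm
  rw [h1, Nat.card_congr hequiv, Nat.card_pi]
  exact Finset.prod_congr rfl fun i _ => Nat.card_coe_set_eq (T i)

end Count
/-- Byott's theorem, as in Subsection 2.4 of the paper, rephrased as
`e'(Γ, G) = ∏_p e'(Γ_p, G_p)`.  For finite nilpotent groups `Γ`, `G` of the same order
`n`, the number of regular subgroups of `Hol G` isomorphic to `Γ` is the product over the
primes `p ∣ n` of the numbers of regular subgroups of `Hol G_p` isomorphic to `Γ_p`. -/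
theorem eprime_nilpotent_product
    {Γ : Type u} {G : Type v} [Group Γ] [Group G] [Finite Γ] [Finite G]
    (hΓnil : Group.IsNilpotent Γ) (hGnil : Group.IsNilpotent G)
    {n : ℕ} (hΓ : Nat.card Γ = n) (hG : Nat.card G = n)
    (PΓ : ∀ p : ℕ, Sylow p Γ) (PG : ∀ p : ℕ, Sylow p G) :
    eprime Γ G = ∏ p ∈ n.primeFactors, eprime (PΓ p) (PG p) := by
  classical
  subst hG
  set ps := (Nat.card G).primeFactors with hps
  have hGnormal : ∀ {p : ℕ} [Fact p.Prime] (P : Sylow p G), (P : Subgroup G).Normal := by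
    intro p hp P
    have h := (isNilpotent_of_finite_tfae (G := G)).out 0 3
    exact h.mp hGnil p hp P
  have hΓnormal : ∀ {p : ℕ} [Fact p.Prime] (P : Sylow p Γ), (P : Subgroup Γ).Normal := by
    intro p hp P
    have h := (isNilpotent_of_finite_tfae (G := Γ)).out 0 3
    exact h.mp hΓnil p hp P
  -- the Sylow direct-product decompositions
  have e1G : (∀ p : ps, ∀ P : Sylow (p : ℕ) G, ↥(P : Subgroup G)) ≃* G :=
    Sylow.directProductOfNormal hGnormal
  have e1Γ' : (∀ p : (Nat.card Γ).primeFactors, ∀ P : Sylow (p : ℕ) Γ, ↥(P : Subgroup Γ)) ≃* Γ :=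
    Sylow.directProductOfNormal hΓnormal
  rw [hΓ] at e1Γ'
  -- compress the inner products using uniqueness of Sylow subgroups
  have innerG : ∀ p : ps, (∀ P : Sylow (p : ℕ) G, ↥(P : Subgroup G)) ≃*
      ↥((PG (p : ℕ) : Subgroup G)) := by
    intro p
    haveI : Fact (p : ℕ).Prime := ⟨Nat.prime_of_mem_primeFactors p.2⟩
    letI : Unique (Sylow (p : ℕ) G) := Sylow.unique_of_normal (PG ↑p) (hGnormal (PG ↑p))
    refine (MulEquiv.piUnique _).trans (MulEquiv.subgroupCongr ?_)
    rw [Subsingleton.elim (default : Sylow (p : ℕ) G) (PG ↑p)]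
  have innerΓ : ∀ p : ps, (∀ P : Sylow (p : ℕ) Γ, ↥(P : Subgroup Γ)) ≃*
      ↥((PΓ (p : ℕ) : Subgroup Γ)) := by
    intro p
    haveI : Fact (p : ℕ).Prime := ⟨Nat.prime_of_mem_primeFactors p.2⟩
    letI : Unique (Sylow (p : ℕ) Γ) := Sylow.unique_of_normal (PΓ ↑p) (hΓnormal (PΓ ↑p))
    refine (MulEquiv.piUnique _).trans (MulEquiv.subgroupCongr ?_)
    rw [Subsingleton.elim (default : Sylow (p : ℕ) Γ) (PΓ ↑p)]
  have eG : G ≃* ∀ p : ps, ↥((PG (p : ℕ) : Subgroup G)) :=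
    e1G.symm.trans (MulEquiv.piCongrRight innerG)
  have eΓ : Γ ≃* ∀ p : ps, ↥((PΓ (p : ℕ) : Subgroup Γ)) :=
    e1Γ'.symm.trans (MulEquiv.piCongrRight innerΓ)
  -- hypotheses for `eprime_pi`
  have hpr' : ∀ p : ps, (p : ℕ).Prime := fun p => Nat.prime_of_mem_primeFactors p.2
  have hprinj' : Function.Injective (fun p : ps => (p : ℕ)) := Subtype.val_injective
  have hcard' : ∀ p : ps,
      Nat.card ↥((PG (p : ℕ) : Subgroup G)) = (p : ℕ) ^ (Nat.card G).factorization (p : ℕ) := by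
    intro p
    haveI : Fact (p : ℕ).Prime := ⟨hpr' p⟩
    exact Sylow.card_eq_multiplicity (PG ↑p)
  calc eprime Γ G
      = eprime Γ (∀ p : ps, ↥((PG (p : ℕ) : Subgroup G))) := eprime_congr_right Γ eG
    _ = ∏ p : ps, eprime ↥((PΓ (p : ℕ) : Subgroup Γ)) ↥((PG (p : ℕ) : Subgroup G)) :=
        eprime_pi hpr' hprinj' hcard' Γ hΓnil (fun p => PΓ (p : ℕ)) eΓ
    _ = ∏ p ∈ ps, eprime (PΓ p) (PG p) :=
        Finset.prod_coe_sort ps (fun p => eprime (PΓ p) (PG p))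
end HGS
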